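/- Let n ≥ 2 be an integer and let p ∈ (0,1), δ ∈ (0,1), r ∈ ℝ. Set ξ = (1−δp)/(δ(1−p)). Then ξ > 1, and the linear system in unknowns (V^1,…,V^n) ∈ ℝ^n given by V^k = (1−δ)c_k + δ(p·V^k + (1−p)·V^{k+1}) for k = 1,…,n−1, and V^n = (1−δ)r + δ(p·V^n + (1−p)·V^1), where c_1 = 0 and c_k = r for 2 ≤ k ≤ n, has a unique solution, namely V^1 = r(ξ^{n−1}−1)/(ξ^n−1) and V^k = r(1 − (ξ−1)ξ^{k−2}/(ξ^n−1)) for k = 2,…,n. -/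

import Mathlib

/-- The cyclic rotation system of the desirable-task model has a unique
solution, given in closed form.  Indices `1, …, n` are paper indices. -/
theorem stmt_12 (n : ℕ) (hn : 2 ≤ n) (p δ r : ℝ)
    (hp : p ∈ Set.Ioo (0 : ℝ) 1) (hδ : δ ∈ Set.Ioo (0 : ℝ) 1)
    (ξ : ℝ) (hξ : ξ = (1 - δ * p) / (δ * (1 - p))) :
    1 < ξ ∧
    ∀ V : ℕ → ℝ,
      ((∀ k, 1 ≤ k → k ≤ n - 1 →
          V k = (1 - δ) * (if k = 1 then (0 : ℝ) else r)
              + δ * (p * V k + (1 - p) * V (k + 1))) ∧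
        V n = (1 - δ) * r + δ * (p * V n + (1 - p) * V 1))
      ↔ (V 1 = r * (ξ ^ (n - 1) - 1) / (ξ ^ n - 1) ∧
          ∀ k, 2 ≤ k → k ≤ n →
            V k = r * (1 - (ξ - 1) * ξ ^ (k - 2) / (ξ ^ n - 1))) := by
  obtain ⟨hp0, hp1⟩ := hp
  obtain ⟨hδ0, hδ1⟩ := hδ
  have hB : 0 < δ * (1 - p) := by nlinarith
  have hξ1 : 1 < ξ := by
    rw [hξ, lt_div_iff₀ hB]; nlinarith
  have hξ0 : (0:ℝ) < ξ := lt_trans one_pos hξ1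
  have hD : (0:ℝ) < ξ ^ n - 1 := by
    have := one_lt_pow₀ hξ1 (by omega : n ≠ 0)
    linarith
  have hDne : ξ ^ n - 1 ≠ 0 := ne_of_gt hD
  have e1 : ξ ^ (n-2) * ξ = ξ ^ (n-1) := by
    rw [← pow_succ]; congr 1; omega
  have e2 : ξ ^ (n-1) * ξ = ξ ^ n := by
    rw [← pow_succ]; congr 1; omega
  have hDne' : ξ ^ (n-1) * ξ - 1 ≠ 0 := by rw [e2]; exact hDne
  have hDne'' : ξ ^ (n-2) * ξ * ξ - 1 ≠ 0 := by rw [e1, e2]; exact hDne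
  have step : ∀ x y c : ℝ,
      (x = (1-δ)*c + δ*(p*x + (1-p)*y)) ↔ y = ξ*x - (ξ-1)*c := by
    intro x y c
    have h1 : (x = (1-δ)*c + δ*(p*x + (1-p)*y)) ↔
        δ*(1-p)*y = (1-δ*p)*x - (1-δ)*c := by
      constructor <;> intro h <;> ring_nf at h ⊢ <;> linarith
    have hk : ξ * (δ*(1-p)) = 1 - δ*p := by
      rw [hξ, div_mul_cancel₀ _ hB.ne']
    rw [h1]
    constructor
    · intro h
      apply mul_right_cancel₀ hB.ne'
      linear_combination h + (c - x) * hk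
    · intro h
      linear_combination (δ*(1-p)) * h + (x - c) * hk
  refine ⟨hξ1, fun V => ⟨?_, ?_⟩⟩
  · rintro ⟨heq, hcyc⟩
    have hstep : ∀ k, 1 ≤ k → k ≤ n-1 →
        V (k+1) = ξ * V k - (ξ-1) * (if k = 1 then (0:ℝ) else r) :=
      fun k h1 h2 => (step _ _ _).mp (heq k h1 h2)
    have hcyc' : V 1 = ξ * V n - (ξ-1)*r := (step _ _ _).mp hcyc
    have hgen : ∀ j, j ≤ n-2 → V (j+2) = r + ξ^j * (ξ * V 1 - r) := by
      intro j
      induction j with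
      | zero =>
        intro _
        have h := hstep 1 le_rfl (by omega)
        rw [if_pos rfl] at h
        rw [h]; ring
      | succ j ih =>
        intro hj
        have h := hstep (j+2) (by omega) (by omega)
        rw [if_neg (by omega)] at h
        have ihj := ih (by omega)
        rw [show j + 1 + 2 = j + 2 + 1 from by ring, h, ihj]; ring
    have hVn : V n = r + ξ^(n-2) * (ξ * V 1 - r) := by
      have := hgen (n-2) le_rfl
      rwa [show n - 2 + 2 = n from by omega] at this
    have key : V 1 * (ξ^n - 1) = r * (ξ^(n-1) - 1) := by
      have h := hcyc'
      rw [hVn] at h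
      rw [← e2, ← e1]
      linear_combination -h
    have hV1 : V 1 = r * (ξ ^ (n - 1) - 1) / (ξ ^ n - 1) := by
      rw [eq_div_iff hDne]; exact key
    refine ⟨hV1, fun k h2 hk => ?_⟩
    have hk' := hgen (k-2) (by omega)
    rw [show k - 2 + 2 = k from by omega] at hk'
    rw [hk', hV1, ← e2]
    field_simp
    linear_combination (r * ξ ^ (k - 2)) * mul_inv_cancel₀ hDne'
  · rintro ⟨hV1, hVk⟩
    constructor
    · intro k hk1 hkn
      rw [step]
      by_cases hk : k = 1
      · subst hk
        rw [if_pos rfl, hVk 2 le_rfl hn, hV1,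
          show (2:ℕ) - 2 = 0 from rfl, pow_zero, ← e2]
        field_simp
        linear_combination (-r) * mul_inv_cancel₀ hDne'
      · rw [if_neg hk, hVk k (by omega) (by omega),
          hVk (k+1) (by omega) (by omega),
          show k + 1 - 2 = (k-2)+1 from by omega, pow_succ]
        field_simp
        ring
    · rw [step, hV1, hVk n hn le_rfl, ← e2, ← e1]
      field_simp
      linear_combination r * mul_inv_cancel₀ hDne''
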